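/- Let n ≥ 2, let λ_0, …, λ_n be pairwise distinct complex numbers, and let c_0, …, c_n be nonzero complex numbers. Suppose x = (x_0, …, x_n) ∈ ℂ^{n+1} is nonzero and satisfies ∑_{i=0}^n c_i λ_i^k x_i² = 0 for every k = 0, …, n−2. Then the (n−1) × (n+1) matrix J with entries J_{k,i} = c_i λ_i^k x_i (0 ≤ k ≤ n−2, 0 ≤ i ≤ n) has rank n−1. -/

import Mathlib

open Polynomial Finset

/-- Key computation: any polynomial of degree `< n-1` pairs to zero against the
solution vector `(c_i x_i²)`. -/
private lemma key_sum (n : ℕ) (lam c : Fin (n + 1) → ℂ) (x : Fin (n + 1) → ℂ)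
    (hsol : ∀ k < n - 1, ∑ i, c i * lam i ^ k * x i ^ 2 = 0)
    (Q : ℂ[X]) (hQ : Q.natDegree < n - 1) :
    ∑ i, c i * x i ^ 2 * Q.eval (lam i) = 0 := by
  have hev : ∀ i, Q.eval (lam i) = ∑ k ∈ range (n - 1), Q.coeff k * lam i ^ k := fun i =>
    Polynomial.eval_eq_sum_range' hQ (lam i)
  calc ∑ i, c i * x i ^ 2 * Q.eval (lam i)
      = ∑ i, ∑ k ∈ range (n - 1), Q.coeff k * (c i * lam i ^ k * x i ^ 2) := by
        refine Finset.sum_congr rfl fun i _ => ?_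
        rw [hev i, Finset.mul_sum]
        exact Finset.sum_congr rfl fun k _ => by ring
    _ = ∑ k ∈ range (n - 1), Q.coeff k * ∑ i, c i * lam i ^ k * x i ^ 2 := by
        rw [Finset.sum_comm]
        exact Finset.sum_congr rfl fun k _ => (Finset.mul_sum _ _ _).symm
    _ = 0 := by
        refine Finset.sum_eq_zero fun k hk => ?_
        rw [hsol k (Finset.mem_range.mp hk), mul_zero]

/-- Let `n ≥ 2`, let `λ_0, …, λ_n` be pairwise distinct complex numbers and
`c_0, …, c_n` nonzero complex numbers.  If `x ∈ ℂ^{n+1}` is nonzero and satisfies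
`∑ i, c_i λ_i^k x_i² = 0` for every `k = 0, …, n-2`, then the `(n-1) × (n+1)` matrix `J`
with entries `J_{k,i} = c_i λ_i^k x_i` has rank `n - 1`. -/
theorem stmt_3 (n : ℕ) (hn : 2 ≤ n) (lam c : Fin (n + 1) → ℂ)
    (hlam : Function.Injective lam) (hc : ∀ i, c i ≠ 0)
    (x : Fin (n + 1) → ℂ) (hx : x ≠ 0)
    (hsol : ∀ k < n - 1, ∑ i, c i * lam i ^ k * x i ^ 2 = 0) :
    (Matrix.of fun (k : Fin (n - 1)) (i : Fin (n + 1)) =>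
        c i * lam i ^ (k : ℕ) * x i).rank = n - 1 := by
  classical
  -- The support of `x`.
  set S : Finset (Fin (n + 1)) := Finset.univ.filter (fun i => x i ≠ 0) with hS
  have hmemS : ∀ i, i ∈ S ↔ x i ≠ 0 := by
    intro i; simp [hS]
  -- `S` is nonempty.
  obtain ⟨j0, hj0⟩ : ∃ i, x i ≠ 0 := by
    by_contra h
    push_neg at h
    exact hx (funext h)
  -- Step 1: `S` has at least `n` elements.
  have hcard : n ≤ S.card := by
    by_contra hlt
    push_neg at hlt
    have hj0S : j0 ∈ S := (hmemS j0).mpr hj0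
    set Q : ℂ[X] := Lagrange.basis S lam j0 with hQdef
    have hinj : Set.InjOn lam S := hlam.injOn
    have hQdeg : Q.natDegree < n - 1 := by
      rw [hQdef, Lagrange.natDegree_basis hinj hj0S]
      have h1 : 1 ≤ S.card := Finset.card_pos.mpr ⟨j0, hj0S⟩
      omega
    have h0 := key_sum n lam c x hsol Q hQdeg
    have hsum : ∑ i, c i * x i ^ 2 * Q.eval (lam i) = c j0 * x j0 ^ 2 := by
      rw [Finset.sum_eq_single_of_mem j0 (Finset.mem_univ j0)]
      · rw [hQdef, Lagrange.eval_basis_self hinj hj0S, mul_one]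
      · intro i _ hij
        by_cases hxi : x i = 0
        · rw [hxi]; ring
        · have hiS : i ∈ S := (hmemS i).mpr hxi
          rw [hQdef, Lagrange.eval_basis_of_ne (Ne.symm hij) hiS, mul_zero]
    rw [hsum] at h0
    rcases mul_eq_zero.mp h0 with h | h
    · exact hc j0 h
    · exact hj0 (pow_eq_zero_iff (by norm_num) |>.mp h)
  -- Step 2: the rows of the matrix are linearly independent.
  have hli : LinearIndependent ℂ (Matrix.of fun (k : Fin (n - 1)) (i : Fin (n + 1)) =>
      c i * lam i ^ (k : ℕ) * x i) := by
    refine Fintype.linearIndependent_iff.mpr ?_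
    intro g hg k
    -- Define the polynomial `P = ∑ g k X^k`.
    set P : ℂ[X] := ∑ m : Fin (n - 1), C (g m) * X ^ (m : ℕ) with hPdef
    have hPdeg : P.natDegree ≤ n - 2 := by
      refine Polynomial.natDegree_sum_le_of_forall_le _ _ fun m _ => ?_
      exact le_trans (Polynomial.natDegree_C_mul_X_pow_le _ _) (by omega)
    -- `P` vanishes at `lam i` for every `i ∈ S`.
    have hPeval : ∀ i ∈ S, P.eval (lam i) = 0 := by
      intro i hiS
      have hgi := congrFun hg i
      simp only [Finset.sum_apply, Pi.smul_apply, Matrix.of_apply, smul_eq_mul,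
        Pi.zero_apply] at hgi
      have : c i * x i * P.eval (lam i) = 0 := by
        rw [hPdef]
        rw [Polynomial.eval_finset_sum]
        simp only [Polynomial.eval_mul, Polynomial.eval_C, Polynomial.eval_pow,
          Polynomial.eval_X]
        rw [Finset.mul_sum, ← hgi]
        exact Finset.sum_congr rfl fun m _ => by ring
      rcases mul_eq_zero.mp this with h | h
      · rcases mul_eq_zero.mp h with h' | h'
        · exact absurd h' (hc i)
        · exact absurd h' ((hmemS i).mp hiS)
      · exact h
    -- `P = 0` since it vanishes at `≥ n` distinct points but has degree `≤ n-2`.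
    have hP0 : P = 0 := by
      refine Polynomial.eq_zero_of_natDegree_lt_card_of_eval_eq_zero' P (S.image lam)
        (fun y hy => ?_) ?_
      · obtain ⟨i, hiS, rfl⟩ := Finset.mem_image.mp hy
        exact hPeval i hiS
      · rw [Finset.card_image_of_injective _ hlam]
        omega
    -- Extract the coefficients.
    have : P.coeff (k : ℕ) = g k := by
      rw [hPdef, Polynomial.finset_sum_coeff]
      simp only [Polynomial.coeff_C_mul, Polynomial.coeff_X_pow]
      rw [Finset.sum_eq_single k]
      · simp
      · intro m _ hmk
        have : (k : ℕ) ≠ (m : ℕ) := fun h => hmk (Fin.ext h.symm)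
        simp [this]
      · simp
    rw [hP0] at this
    simpa using this.symm
  rw [hli.rank_matrix]
  simp
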